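/- Let G be a graph that minimally biconnects a set Q of terminals. Then for any pair of terminals x, y ∈ Q, for any two internally vertex-disjoint x-to-y paths P_1, P_2 in G, every path in G connecting a vertex of P_1 to a vertex of P_2 (other than along P_1 ∪ P_2) contains a vertex of Q. -/

import Mathlib

open SimpleGraph

universe u

variable {V : Type u}

/-- Two walks with the same endpoints are internally vertex-disjoint. -/
def IntDisjoint {G : SimpleGraph V} {x y : V} (p q : G.Walk x y) : Prop :=
  ∀ v ∈ p.support, v ∈ q.support → v = x ∨ v = y

/-- There are `k` pairwise internally vertex-disjoint `x`-`y` paths in `G`. -/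
def ConnK (G : SimpleGraph V) (k : ℕ) (x y : V) : Prop :=
  ∃ P : Fin k → G.Walk x y, (∀ i, (P i).IsPath) ∧
    ∀ i j, i ≠ j → IntDisjoint (P i) (P j)

/-- `G` is `(Q,r)`-vertex-connected. -/
def QRConn (G : SimpleGraph V) (Q : Set V) (r : V → ℕ) : Prop :=
  ∀ x ∈ Q, ∀ y ∈ Q, x ≠ y → ConnK G (min (r x) (r y)) x y

/-- Delete a vertex (isolate it). -/
def delV (G : SimpleGraph V) (v : V) : SimpleGraph V where
  Adj a b := G.Adj a b ∧ a ≠ v ∧ b ≠ v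
  symm := by constructor; intro a b h; exact ⟨h.1.symm, h.2.2, h.2.1⟩
  loopless := by constructor; intro a h; exact G.ne_of_adj h.1 rfl

/-- `G` is minimally `(Q,r)`-vertex-connected: it is `(Q,r)`-vertex-connected but
deleting any edge or any vertex destroys this property. -/
def MinQR (G : SimpleGraph V) (Q : Set V) (r : V → ℕ) : Prop :=
  QRConn G Q r ∧ (∀ e ∈ G.edgeSet, ¬ QRConn (G.deleteEdges {e}) Q r) ∧
    ∀ v : V, ¬ QRConn (delV G v) Q r

/-- Biconnected: at least 3 vertices, connected, and no cut vertex. -/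
def Biconnected (G : SimpleGraph V) : Prop :=
  3 ≤ Nat.card V ∧ G.Connected ∧ ∀ v : V, (SimpleGraph.induce {w | w ≠ v} G).Connected

/-- Three-vertex-connected: more than 3 vertices and removing any at most 2
vertices leaves the graph connected. -/
def ThreeConnected (G : SimpleGraph V) : Prop :=
  4 ≤ Nat.card V ∧ ∀ s : Set V, s.ncard ≤ 2 → (SimpleGraph.induce sᶜ G).Connected

/-- Degree of a vertex. -/
noncomputable def vdeg (G : SimpleGraph V) (v : V) : ℕ := (G.neighborSet v).ncard

/-- The contracted version of `G`: suppress all degree-2 vertices.  Two vertices of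
degree `≠ 2` are adjacent iff they are joined by a path all of whose internal
vertices have degree 2. -/
def suppress (G : SimpleGraph V) : SimpleGraph {v : V // vdeg G v ≠ 2} where
  Adj u v := u ≠ v ∧ ∃ p : G.Walk u.1 v.1, p.IsPath ∧
      ∀ w ∈ p.support, w ≠ u.1 → w ≠ v.1 → vdeg G w = 2
  symm := by
    constructor
    rintro u v ⟨hne, p, hp, hint⟩
    refine ⟨hne.symm, p.reverse, hp.reverse, ?_⟩
    intro w hw h1 h2
    rw [SimpleGraph.Walk.support_reverse, List.mem_reverse] at hw
    exact hint w hw h2 h1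
  loopless := by constructor; intro u h; exact h.1 rfl

/-- The removal operation of Holton–Jackson–Saito–Wormald: delete the edge `uv`,
suppress any resulting degree-2 vertices and simplify parallel edges; the edge is
removable when the result is three-connected. -/
def Removable (G : SimpleGraph V) (u v : V) : Prop :=
  ThreeConnected (suppress (G.deleteEdges {s(u, v)}))

section Helpers

variable {G : SimpleGraph V}

lemma IntDisjoint.symm' {x y : V} {p q : G.Walk x y} (h : IntDisjoint p q) :
    IntDisjoint q p := fun v hv hv' => h v hv' hv

lemma connK_two_intro {x y : V} (A B : G.Walk x y) (hA : A.IsPath) (hB : B.IsPath)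
    (h : IntDisjoint A B) : ConnK G 2 x y := by
  refine ⟨fun i => if i = 0 then A else B, ?_, ?_⟩
  · intro i
    by_cases h0 : i = 0 <;> simp [h0, hA, hB]
  · intro i j hij
    fin_cases i <;> fin_cases j <;> simp_all <;> first
      | exact h
      | exact h.symm'

lemma connK_two_elim {x y : V} (h : ConnK G 2 x y) :
    ∃ A B : G.Walk x y, A.IsPath ∧ B.IsPath ∧ IntDisjoint A B := by
  obtain ⟨P, hP, hd⟩ := h
  exact ⟨P 0, P 1, hP 0, hP 1, hd 0 1 (by decide)⟩

lemma not_mem_support_delV_walk {v : V} :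
    ∀ {a b : V} (p : (delV G v).Walk a b), a ≠ v → v ∉ p.support
  | a, _, SimpleGraph.Walk.nil, ha => by
      simp only [SimpleGraph.Walk.support_nil, List.mem_singleton]
      exact fun h => ha h.symm
  | a, b, SimpleGraph.Walk.cons h p, ha => by
      rw [SimpleGraph.Walk.support_cons, List.mem_cons]
      rintro (h1 | h2)
      · exact ha h1.symm
      · exact not_mem_support_delV_walk p (fun hh => h.2.2 hh) h2

lemma delV_walk_to_walk {v a b : V} (p : (delV G v).Walk a b) :
    ∃ q : G.Walk a b, q.support = p.support := by
  induction p with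
  | nil => exact ⟨SimpleGraph.Walk.nil, rfl⟩
  | cons h p ih =>
    obtain ⟨q, hq⟩ := ih
    exact ⟨SimpleGraph.Walk.cons h.1 q, by
      rw [SimpleGraph.Walk.support_cons, SimpleGraph.Walk.support_cons, hq]⟩

lemma reach_delV_of_walk {z a b : V} (p : G.Walk a b) (hz : z ∉ p.support) :
    (delV G z).Reachable a b := by
  induction p with
  | nil => exact SimpleGraph.Reachable.refl _
  | cons h p ih =>
    rename_i u v w
    rw [SimpleGraph.Walk.support_cons, List.mem_cons] at hz
    push_neg at hz
    have hadj : (delV G z).Adj u v := by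
      refine ⟨h, fun hh => hz.1 hh.symm, fun hh => ?_⟩
      exact hz.2 (hh ▸ SimpleGraph.Walk.start_mem_support p)
    exact hadj.reachable.trans (ih hz.2)

lemma reach_of_walk_avoid {z : V} {e : Sym2 V} {a b : V} (p : G.Walk a b)
    (he : e ∉ p.edges) (hz : z ∉ p.support) :
    (delV (G.deleteEdges {e}) z).Reachable a b := by
  induction p with
  | nil => exact SimpleGraph.Reachable.refl _
  | cons h p ih =>
    rename_i u v w
    rw [SimpleGraph.Walk.support_cons, List.mem_cons] at hz
    push_neg at hz
    rw [SimpleGraph.Walk.edges_cons, List.mem_cons] at he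
    push_neg at he
    have hadj : (delV (G.deleteEdges {e}) z).Adj u v := by
      refine ⟨?_, fun hh => hz.1 hh.symm, fun hh => hz.2 (hh ▸ SimpleGraph.Walk.start_mem_support p)⟩
      rw [SimpleGraph.deleteEdges_adj]
      exact ⟨h, by simpa using fun hh => he.1 hh.symm⟩
    exact hadj.reachable.trans (ih he.2 hz.2)

lemma reach_splice {z : V} {e : Sym2 V} {aa cc : V} (hecc : e = s(aa, cc))
    (hΔ : (delV (G.deleteEdges {e}) z).Reachable aa cc) :
    ∀ {p q : V} (π : G.Walk p q), z ∉ π.support →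
      (delV (G.deleteEdges {e}) z).Reachable p q := by
  intro p q π
  induction π with
  | nil => exact fun _ => SimpleGraph.Reachable.refl _
  | cons h π ih =>
    rename_i u v w
    intro hz
    rw [SimpleGraph.Walk.support_cons, List.mem_cons] at hz
    push_neg at hz
    by_cases hcase : s(u, v) = e
    · have : (u = aa ∧ v = cc) ∨ (u = cc ∧ v = aa) := by
        rw [hecc] at hcase
        exact Sym2.eq_iff.mp hcase
      rcases this with ⟨rfl, rfl⟩ | ⟨rfl, rfl⟩
      · exact hΔ.trans (ih hz.2)
      · exact hΔ.symm.trans (ih hz.2)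
    · have hadj : (delV (G.deleteEdges {e}) z).Adj u v := by
        refine ⟨?_, fun hh => hz.1 hh.symm,
          fun hh => hz.2 (hh ▸ SimpleGraph.Walk.start_mem_support π)⟩
        rw [SimpleGraph.deleteEdges_adj]
        exact ⟨h, by simpa using hcase⟩
      exact hadj.reachable.trans (ih hz.2)

/-- If `w` lies in both halves of a path split at `u`, then `w = u`. -/
lemma mem_takeUntil_mem_dropUntil [DecidableEq V] {s t u w : V} {p : G.Walk s t}
    (hp : p.IsPath) (h : u ∈ p.support)
    (h1 : w ∈ (p.takeUntil u h).support) (h2 : w ∈ (p.dropUntil u h).support) : w = u := by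
  by_contra hne
  have hnod : p.support.Nodup := hp.support_nodup
  conv at hnod => rw [← p.take_spec h]
  rw [SimpleGraph.Walk.support_append] at hnod
  have h2' : w ∈ (p.dropUntil u h).support.tail := by
    have hcons := (p.dropUntil u h).support_eq_cons
    rw [hcons] at h2
    rcases List.mem_cons.mp h2 with h2 | h2
    · exact absurd h2 hne
    · exact h2
  exact List.disjoint_of_nodup_append hnod h1 h2'

lemma start_mem_dropUntil_eq [DecidableEq V] {s t u : V} {p : G.Walk s t}
    (hp : p.IsPath) (h : u ∈ p.support) (hs : s ∈ (p.dropUntil u h).support) : s = u :=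
  mem_takeUntil_mem_dropUntil hp h (SimpleGraph.Walk.start_mem_support _) hs

lemma end_mem_takeUntil_eq [DecidableEq V] {s t u : V} {p : G.Walk s t}
    (hp : p.IsPath) (h : u ∈ p.support) (ht : t ∈ (p.takeUntil u h).support) : t = u :=
  mem_takeUntil_mem_dropUntil hp h ht (SimpleGraph.Walk.end_mem_support _)

lemma isPath_append_of_meet {a w b : V} {p : G.Walk a w} {q : G.Walk w b}
    (hp : p.IsPath) (hq : q.IsPath)
    (hmeet : ∀ u, u ∈ p.support → u ∈ q.support → u = w) : (p.append q).IsPath := by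
  rw [SimpleGraph.Walk.isPath_def, SimpleGraph.Walk.support_append]
  have hq' : q.support.tail.Nodup := by
    have := hq.support_nodup
    rw [q.support_eq_cons] at this
    exact this.of_cons
  refine List.Nodup.append hp.support_nodup hq' ?_
  intro u hu hu'
  have hu'' : u ∈ q.support := List.mem_of_mem_tail hu'
  have : u = w := hmeet u hu hu''
  subst this
  have := hq.support_nodup
  rw [q.support_eq_cons] at this
  exact (List.nodup_cons.mp this).1 hu'

/-- First hit of a set `S` along a walk ending in `S`. -/
lemma exists_firsthit {s t : V} (ω : G.Walk s t) (S : Set V) (ht : t ∈ S) :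
    ∃ w, w ∈ S ∧ ∃ pre : G.Walk s w,
      (∀ u ∈ pre.support, u ∈ S → u = w) ∧
      (∀ u ∈ pre.support, u ∈ ω.support) ∧
      (ω.IsPath → pre.IsPath) ∧ pre.length ≤ ω.length := by
  induction ω with
  | nil =>
    rename_i u₀
    refine ⟨u₀, ht, SimpleGraph.Walk.nil, ?_, fun u hu => hu,
      fun _ => SimpleGraph.Walk.IsPath.nil, le_refl _⟩
    intro u hu _
    simpa using hu
  | cons h ω ih =>
    rename_i u₀ v₀ t₀
    by_cases hs : u₀ ∈ S
    · refine ⟨u₀, hs, SimpleGraph.Walk.nil, ?_, ?_, fun _ => SimpleGraph.Walk.IsPath.nil,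
        Nat.zero_le _⟩
      · intro u hu _
        simpa using hu
      · intro u hu
        have : u = u₀ := by simpa using hu
        rw [SimpleGraph.Walk.support_cons, this]
        exact List.mem_cons_self
    · obtain ⟨w, hwS, pre, hfirst, hsub, hpath, hlen⟩ := ih ht
      refine ⟨w, hwS, SimpleGraph.Walk.cons h pre, ?_, ?_, ?_, ?_⟩
      · intro u hu huS
        rw [SimpleGraph.Walk.support_cons, List.mem_cons] at hu
        rcases hu with rfl | hu
        · exact absurd huS hs
        · exact hfirst u hu huS
      · intro u hu
        rw [SimpleGraph.Walk.support_cons, List.mem_cons] at hu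
        rw [SimpleGraph.Walk.support_cons, List.mem_cons]
        rcases hu with rfl | hu
        · exact Or.inl rfl
        · exact Or.inr (hsub u hu)
      · intro hcons
        have h1 := hcons.of_cons
        have h2 : u₀ ∉ ω.support := ((SimpleGraph.Walk.cons_isPath_iff _ _).mp hcons).2
        exact (hpath h1).cons (fun hh => h2 (hsub _ hh))
      · simpa using Nat.succ_le_succ hlen

end Helpers

section Menger

variable {G : SimpleGraph V}

/-- Attach `s` to a 2-system for `(v,t)` when `s` lies on one of the two paths. -/
lemma attach_mem {H : SimpleGraph V} [DecidableEq V] {s v t : V}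
    (hadj : H.Adj s v) (hsv : s ≠ v) (hst : s ≠ t)
    (A B : H.Walk v t) (hA : A.IsPath) (hB : B.IsPath) (hdAB : IntDisjoint A B)
    (hs1 : s ∈ A.support) (hs2 : s ∉ B.support) : ConnK H 2 s t := by
  have hQ1 : (A.dropUntil s hs1).IsPath := hA.dropUntil hs1
  have hvQ1 : v ∉ (A.dropUntil s hs1).support := by
    intro hv
    exact hsv (start_mem_dropUntil_eq hA hs1 hv).symm
  have hQ2 : (SimpleGraph.Walk.cons hadj B).IsPath := hB.cons hs2
  refine connK_two_intro (A.dropUntil s hs1) (SimpleGraph.Walk.cons hadj B) hQ1 hQ2 ?_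
  intro w hw1 hw2
  rw [SimpleGraph.Walk.support_cons, List.mem_cons] at hw2
  rcases hw2 with rfl | hw2
  · exact Or.inl rfl
  · have hw1' : w ∈ A.support := SimpleGraph.Walk.support_dropUntil_subset A hs1 hw1
    rcases hdAB w hw1' hw2 with rfl | rfl
    · exact absurd hw1 hvQ1
    · exact Or.inr rfl

/-- Attach `s` to a 2-system for `(v,t)` via a first-hit prefix, when `s` avoids both paths. -/
lemma attach_pre {H : SimpleGraph V} [DecidableEq V] {s v t w : V}
    (hadj : H.Adj s v) (hst : s ≠ t)
    (A B : H.Walk v t) (hA : A.IsPath) (hB : B.IsPath) (hdAB : IntDisjoint A B)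
    (hs1 : s ∉ A.support) (hs2 : s ∉ B.support)
    (pre : H.Walk s w) (hpre : pre.IsPath) (hwA : w ∈ A.support)
    (hfirst : ∀ u ∈ pre.support, (u ∈ A.support ∨ u ∈ B.support) → u = w)
    (hvpre : v ∉ pre.support) (hwv : w ≠ v) : ConnK H 2 s t := by
  have hdropP : (A.dropUntil w hwA).IsPath := hA.dropUntil hwA
  have hQ1 : (pre.append (A.dropUntil w hwA)).IsPath := by
    refine isPath_append_of_meet hpre hdropP ?_
    intro u hu hu'
    exact hfirst u hu (Or.inl (SimpleGraph.Walk.support_dropUntil_subset A hwA hu'))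
  have hvQ1 : v ∉ (pre.append (A.dropUntil w hwA)).support := by
    rw [SimpleGraph.Walk.mem_support_append_iff]
    rintro (hv | hv)
    · exact hvpre hv
    · exact hwv (start_mem_dropUntil_eq hA hwA hv).symm
  have hQ2 : (SimpleGraph.Walk.cons hadj B).IsPath := hB.cons hs2
  refine connK_two_intro (pre.append (A.dropUntil w hwA)) (SimpleGraph.Walk.cons hadj B)
    hQ1 hQ2 ?_
  intro w' hw1 hw2
  rw [SimpleGraph.Walk.support_cons, List.mem_cons] at hw2
  rcases hw2 with rfl | hw2
  · exact Or.inl rfl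
  rw [SimpleGraph.Walk.mem_support_append_iff] at hw1
  rcases hw1 with hw1 | hw1
  · have : w' = w := hfirst w' hw1 (Or.inr hw2)
    subst this
    rcases hdAB w' hwA hw2 with rfl | rfl
    · exact absurd rfl hwv
    · exact Or.inr rfl
  · have hw1' : w' ∈ A.support := SimpleGraph.Walk.support_dropUntil_subset A hwA hw1
    rcases hdAB w' hw1' hw2 with rfl | rfl
    · exact absurd (SimpleGraph.Walk.mem_support_append_iff _ _ |>.mpr (Or.inr hw1)) hvQ1
    · exact Or.inr rfl

/-- Local Menger theorem for `k = 2`. -/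
lemma menger_two (H : SimpleGraph V) :
    ∀ (n : ℕ) (s t : V), s ≠ t →
    (∃ P : H.Walk s t, P.IsPath ∧ P.length ≤ n) →
    (∀ z, z ≠ s → z ≠ t → (delV H z).Reachable s t) →
    ConnK H 2 s t := by
  classical
  intro n
  induction n with
  | zero =>
    rintro s t hst ⟨P, _, hlen⟩ _
    exact absurd (SimpleGraph.Walk.eq_of_length_eq_zero (Nat.le_zero.mp hlen)) hst
  | succ n ih =>
    rintro s t hst ⟨P, hP, hlen⟩ hyp
    by_cases hadj : H.Adj s t
    · refine connK_two_intro (SimpleGraph.Walk.cons hadj SimpleGraph.Walk.nil)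
        (SimpleGraph.Walk.cons hadj SimpleGraph.Walk.nil)
        (SimpleGraph.Walk.IsPath.nil.cons (by simpa using hst)) 
        (SimpleGraph.Walk.IsPath.nil.cons (by simpa using hst)) ?_
      intro w hw _
      rw [SimpleGraph.Walk.support_cons, List.mem_cons] at hw
      rcases hw with rfl | hw
      · exact Or.inl rfl
      · exact Or.inr (by simpa using hw)
    · cases P with
      | nil => exact absurd rfl hst
      | cons hsv P' =>
        rename_i v
        have hcons := (SimpleGraph.Walk.cons_isPath_iff _ _).mp hP
        have hP' : P'.IsPath := hcons.1
        have hsP' : s ∉ P'.support := hcons.2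
        have hvs : v ≠ s := fun h => hsP' (h ▸ P'.start_mem_support)
        have hvt : v ≠ t := fun h => hadj (h ▸ hsv)
        have hypv : ∀ z, z ≠ v → z ≠ t → (delV H z).Reachable v t := by
          intro z hzv hzt
          by_cases hzs : z = s
          · subst hzs
            exact reach_delV_of_walk P' hsP'
          · have h1 : (delV H z).Adj v s := ⟨hsv.symm, Ne.symm hzv, Ne.symm hzs⟩
            exact h1.reachable.trans (hyp z hzs hzt)
        have hconn : ConnK H 2 v t := by
          refine ih v t hvt ⟨P', hP', ?_⟩ hypv
          have : P'.length + 1 ≤ n + 1 := by simpa using hlen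
          omega
        obtain ⟨A, B, hA, hB, hdAB⟩ := connK_two_elim hconn
        by_cases hs1 : s ∈ A.support
        · have hs2 : s ∉ B.support := by
            intro hs2
            rcases hdAB s hs1 hs2 with rfl | rfl
            · exact hvs rfl
            · exact hst rfl
          exact attach_mem hsv (Ne.symm hvs) hst A B hA hB hdAB hs1 hs2
        · by_cases hs2 : s ∈ B.support
          · exact attach_mem hsv (Ne.symm hvs) hst B A hB hA hdAB.symm' hs2 hs1
          · -- s on neither path: use a walk avoiding v
            obtain ⟨ω₀⟩ := hyp v hvs hvt
            obtain ⟨ω, hωsupp⟩ := delV_walk_to_walk ω₀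
            have hvω : v ∉ ω.support := by
              rw [hωsupp]
              exact not_mem_support_delV_walk ω₀ (Ne.symm hvs)
            have hvωb : v ∉ ω.bypass.support :=
              fun h => hvω (SimpleGraph.Walk.support_bypass_subset ω h)
            obtain ⟨w, hwS, pre, hfirst, hsub, hpath, _⟩ :=
              exists_firsthit ω.bypass {u | u ∈ A.support ∨ u ∈ B.support}
                (Or.inl A.end_mem_support)
            have hpre : pre.IsPath := hpath ω.bypass_isPath
            have hvpre : v ∉ pre.support := fun h => hvωb (hsub v h)
            have hwv : w ≠ v := fun h => hvpre (h ▸ pre.end_mem_support)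
            rcases hwS with hwA | hwB
            · exact attach_pre hsv hst A B hA hB hdAB hs1 hs2 pre hpre hwA hfirst hvpre hwv
            · exact attach_pre hsv hst B A hB hA hdAB.symm' hs2 hs1 pre hpre hwB
                (fun u hu h => hfirst u hu h.symm) hvpre hwv

end Menger


section Main

lemma main_aux (G : SimpleGraph V) (Q : Set V)
    (hconn : QRConn G Q (fun _ => 2))
    (hminE : ∀ e ∈ G.edgeSet, ¬ QRConn (G.deleteEdges {e}) Q (fun _ => 2)) :
    ∀ n : ℕ, ∀ x y : V, x ∈ Q → y ∈ Q → x ≠ y →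
    ∀ p1 p2 : G.Walk x y, p1.IsPath → p2.IsPath → IntDisjoint p1 p2 →
    ∀ (a b : V) (R : G.Walk a b), R.IsPath → a ∈ p1.support → b ∈ p2.support →
    (∀ w ∈ R.support, w ≠ a → w ≠ b → w ∉ p1.support ∧ w ∉ p2.support) →
    (∀ q ∈ R.support, q ∉ Q) → R.length ≤ n → False := by
  classical
  intro n
  induction n with
  | zero =>
    intro x y hx hy hxy p1 p2 h1 h2 hd a b R hR ha hb hint hterm hlen
    have hab : a = b := SimpleGraph.Walk.eq_of_length_eq_zero (Nat.le_zero.mp hlen)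
    subst hab
    rcases hd a ha hb with h | h
    · exact hterm a R.start_mem_support (by rw [h]; exact hx)
    · exact hterm a R.start_mem_support (by rw [h]; exact hy)
  | succ n ih =>
    intro x y hx hy hxy p1 p2 h1 h2 hd a b R hR ha hb hint hterm hlen
    have haQ : a ∉ Q := hterm a R.start_mem_support
    have hap2 : a ∉ p2.support := by
      intro hap2
      rcases hd a ha hap2 with h | h
      · exact haQ (by rw [h]; exact hx)
      · exact haQ (by rw [h]; exact hy)
    have hbp1 : b ∉ p1.support := by
      intro hbp1
      rcases hd b hbp1 hb with h | h
      · exact hterm b R.end_mem_support (by rw [h]; exact hx)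
      · exact hterm b R.end_mem_support (by rw [h]; exact hy)
    have hax : a ≠ x := fun h => hap2 (by rw [h]; exact p2.start_mem_support)
    have hay : a ≠ y := fun h => hap2 (by rw [h]; exact p2.end_mem_support)
    have hbx : b ≠ x := fun h => hbp1 (by rw [h]; exact p1.start_mem_support)
    have hby : b ≠ y := fun h => hbp1 (by rw [h]; exact p1.end_mem_support)
    cases R with
    | nil =>
      rcases hd a ha hb with h | h
      · exact haQ (by rw [h]; exact hx)
      · exact haQ (by rw [h]; exact hy)
    | cons hac R' =>
      rename_i c
      have hR' : R'.IsPath := hR.of_cons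
      have haR' : a ∉ R'.support := ((SimpleGraph.Walk.cons_isPath_iff _ _).mp hR).2
      have hcR : c ∈ (SimpleGraph.Walk.cons hac R').support := by
        rw [SimpleGraph.Walk.support_cons]
        exact List.mem_cons_of_mem _ R'.start_mem_support
      have hca : c ≠ a := fun h => haR' (by rw [← h]; exact R'.start_mem_support)
      have hcp1 : c ∉ p1.support := by
        by_cases hcb : c = b
        · rw [hcb]; exact hbp1
        · exact (hint c hcR hca hcb).1
      have heG : s(a, c) ∈ G.edgeSet := G.mem_edgeSet.mpr hac
      have he_p1 : s(a, c) ∉ p1.edges := fun h => hcp1 (p1.snd_mem_support_of_mem_edges h)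
      have he_p2 : s(a, c) ∉ p2.edges := fun h => hap2 (p2.fst_mem_support_of_mem_edges h)
      have he_R' : s(a, c) ∉ R'.edges := fun h => haR' (R'.fst_mem_support_of_mem_edges h)
      -- minimality gives failing terminal pair in G - e
      have hfail := hminE s(a, c) heG
      unfold QRConn at hfail
      push_neg at hfail
      obtain ⟨s, hs, t, ht, hst, hnc⟩ := hfail
      simp only [min_self] at hnc
      -- a 2-system for (s,t) in G
      have hconnG := hconn s hs t ht hst
      simp only [min_self] at hconnG
      obtain ⟨A₀, B₀, hA₀, hB₀, hd₀⟩ := connK_two_elim hconnG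
      have hnbothe : ¬ (s(a, c) ∈ A₀.edges ∧ s(a, c) ∈ B₀.edges) := by
        rintro ⟨hh1, hh2⟩
        rcases hd₀ a (A₀.fst_mem_support_of_mem_edges hh1)
          (B₀.fst_mem_support_of_mem_edges hh2) with h | h
        · exact haQ (by rw [h]; exact hs)
        · exact haQ (by rw [h]; exact ht)
      -- reachability in G - e
      have hreach : ∃ P : (G.deleteEdges {s(a, c)}).Walk s t, P.IsPath := by
        have hfree : ∃ π : G.Walk s t, s(a, c) ∉ π.edges := by
          by_cases h' : s(a, c) ∈ A₀.edges
          · exact ⟨B₀, fun hh => hnbothe ⟨h', hh⟩⟩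
          · exact ⟨A₀, h'⟩
        obtain ⟨π, hπ⟩ := hfree
        exact ⟨(π.toDeleteEdges {s(a, c)} (by
          intro ed hed
          simp only [Set.mem_singleton_iff]
          exact fun h => hπ (h ▸ hed))).bypass, SimpleGraph.Walk.bypass_isPath _⟩
      -- Menger gives a cut vertex z
      have hcut : ∃ z, z ≠ s ∧ z ≠ t ∧
          ¬ (delV (G.deleteEdges {s(a, c)}) z).Reachable s t := by
        by_contra hno
        push_neg at hno
        obtain ⟨P, hPp⟩ := hreach
        exact hnc (menger_two (G.deleteEdges {s(a, c)}) P.length s t hst ⟨P, hPp, le_refl _⟩ hno)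
      obtain ⟨z, hzs, hzt, hzcut⟩ := hcut
      -- a path of the (s,t)-system avoiding z; it must use the edge e
      have hπz : ∃ π : G.Walk s t, z ∉ π.support ∧ s(a, c) ∈ π.edges := by
        have hz_one : ¬ (z ∈ A₀.support ∧ z ∈ B₀.support) := by
          rintro ⟨hz1, hz2⟩
          rcases hd₀ z hz1 hz2 with h | h
          exacts [hzs h, hzt h]
        have hπ' : ∃ π : G.Walk s t, z ∉ π.support := by
          by_cases hz1 : z ∈ A₀.support
          · exact ⟨B₀, fun hh => hz_one ⟨hz1, hh⟩⟩
          · exact ⟨A₀, hz1⟩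
        obtain ⟨π, hπ⟩ := hπ'
        refine ⟨π, hπ, ?_⟩
        by_contra heπ
        exact hzcut (reach_of_walk_avoid π heπ hπ)
      obtain ⟨π, hπzsup, heπ⟩ := hπz
      have hza : z ≠ a := fun h => hπzsup (by rw [h]; exact π.fst_mem_support_of_mem_edges heπ)
      have hzc : z ≠ c := fun h => hπzsup (by rw [h]; exact π.snd_mem_support_of_mem_edges heπ)
      -- the cut vertex z must lie on R'
      have hzR' : z ∈ R'.support := by
        by_contra hzR'
        have hzb : z ≠ b := fun h => hzR' (by rw [h]; exact R'.end_mem_support)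
        have hroute : (z ∉ (p1.takeUntil a ha).support ∧ z ∉ (p2.takeUntil b hb).support)
            ∨ (z ∉ (p1.dropUntil a ha).support ∧ z ∉ (p2.dropUntil b hb).support) := by
          by_cases hw1 : z ∈ (p1.takeUntil a ha).support
          · right
            have hzp1 : z ∈ p1.support := SimpleGraph.Walk.support_takeUntil_subset _ ha hw1
            constructor
            · intro hw2
              exact hza (mem_takeUntil_mem_dropUntil h1 ha hw1 hw2)
            · intro hu2
              have hzp2 : z ∈ p2.support := SimpleGraph.Walk.support_dropUntil_subset _ hb hu2
              rcases hd z hzp1 hzp2 with h | h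
              · subst h
                exact hbx (start_mem_dropUntil_eq h2 hb hu2).symm
              · subst h
                exact hay (end_mem_takeUntil_eq h1 ha hw1).symm
          · by_cases hu1 : z ∈ (p2.takeUntil b hb).support
            · right
              have hzp2 : z ∈ p2.support := SimpleGraph.Walk.support_takeUntil_subset _ hb hu1
              constructor
              · intro hw2
                have hzp1 : z ∈ p1.support := SimpleGraph.Walk.support_dropUntil_subset _ ha hw2
                rcases hd z hzp1 hzp2 with h | h
                · subst h
                  exact hax (start_mem_dropUntil_eq h1 ha hw2).symm
                · subst h
                  exact hby (end_mem_takeUntil_eq h2 hb hu1).symm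
              · intro hu2
                exact hzb (mem_takeUntil_mem_dropUntil h2 hb hu1 hu2)
            · exact Or.inl ⟨hw1, hu1⟩
        have hΔab : (delV (G.deleteEdges {s(a, c)}) z).Reachable a b := by
          rcases hroute with ⟨hz1, hz2⟩ | ⟨hz1, hz2⟩
          · have r1 := reach_of_walk_avoid (p1.takeUntil a ha)
              (fun h => he_p1 (SimpleGraph.Walk.edges_takeUntil_subset _ ha h)) hz1
            have r2 := reach_of_walk_avoid (p2.takeUntil b hb)
              (fun h => he_p2 (SimpleGraph.Walk.edges_takeUntil_subset _ hb h)) hz2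
            exact r1.symm.trans r2
          · have r1 := reach_of_walk_avoid (p1.dropUntil a ha)
              (fun h => he_p1 (SimpleGraph.Walk.edges_dropUntil_subset _ ha h)) hz1
            have r2 := reach_of_walk_avoid (p2.dropUntil b hb)
              (fun h => he_p2 (SimpleGraph.Walk.edges_dropUntil_subset _ hb h)) hz2
            exact r1.trans r2.symm
        have hΔ : (delV (G.deleteEdges {s(a, c)}) z).Reachable a c := by
          refine hΔab.trans (reach_of_walk_avoid R'.reverse ?_ ?_)
          · rw [SimpleGraph.Walk.edges_reverse, List.mem_reverse]
            exact he_R'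
          · rw [SimpleGraph.Walk.support_reverse, List.mem_reverse]
            exact hzR'
        exact hzcut (reach_splice rfl hΔ π hπzsup)
      -- z is a nonterminal vertex of R
      have hzQ : z ∉ Q := hterm z (by
        rw [SimpleGraph.Walk.support_cons]
        exact List.mem_cons_of_mem _ hzR')
      -- choose the separated terminal τ
      obtain ⟨τ, hτQ, hτx, hτreach⟩ :
          ∃ τ, τ ∈ Q ∧ τ ≠ x ∧ ¬ (delV (G.deleteEdges {s(a, c)}) z).Reachable τ x := by
        by_cases hsx : (delV (G.deleteEdges {s(a, c)}) z).Reachable s x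
        · have htx : ¬ (delV (G.deleteEdges {s(a, c)}) z).Reachable t x :=
            fun h => hzcut (hsx.trans h.symm)
          exact ⟨t, ht, fun h => htx (by rw [h]), htx⟩
        · exact ⟨s, hs, fun h => hsx (by rw [h]), hsx⟩
      -- a 2-system for (τ, x) in G
      have hconnτ := hconn τ hτQ x hx hτx
      simp only [min_self] at hconnτ
      obtain ⟨A, B, hA, hB, hdAB⟩ := connK_two_elim hconnτ
      have hits : ∀ W : G.Walk τ x, s(a, c) ∈ W.edges ∨ z ∈ W.support := by
        intro W
        by_contra hW
        push_neg at hW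
        exact hτreach (reach_of_walk_avoid W hW.1 hW.2)
      have hnot_e : ¬ (s(a, c) ∈ A.edges ∧ s(a, c) ∈ B.edges) := by
        rintro ⟨hh1, hh2⟩
        rcases hdAB a (A.fst_mem_support_of_mem_edges hh1)
          (B.fst_mem_support_of_mem_edges hh2) with h | h
        · exact haQ (by rw [h]; exact hτQ)
        · exact haQ (by rw [h]; exact hx)
      have hnot_z : ¬ (z ∈ A.support ∧ z ∈ B.support) := by
        rintro ⟨hh1, hh2⟩
        rcases hdAB z hh1 hh2 with h | h
        · exact hzQ (by rw [h]; exact hτQ)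
        · exact hzQ (by rw [h]; exact hx)
      obtain ⟨A', B', hA', hB', hdA'B', heA', hzB', hzA'⟩ :
          ∃ A' B' : G.Walk τ x, A'.IsPath ∧ B'.IsPath ∧ IntDisjoint A' B' ∧
            s(a, c) ∈ A'.edges ∧ z ∈ B'.support ∧ z ∉ A'.support := by
        rcases hits A with heA | hzA
        · have hzB : z ∈ B.support := by
            rcases hits B with heB | h
            · exact absurd ⟨heA, heB⟩ hnot_e
            · exact h
          exact ⟨A, B, hA, hB, hdAB, heA, hzB, fun h => hnot_z ⟨h, hzB⟩⟩
        · have heB : s(a, c) ∈ B.edges := by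
            rcases hits B with h | hzB
            · exact h
            · exact absurd ⟨hzA, hzB⟩ hnot_z
          exact ⟨B, A, hB, hA, hdAB.symm', heB, hzA, fun h => hnot_z ⟨hzA, h⟩⟩
      have hcA' : c ∈ A'.support := A'.snd_mem_support_of_mem_edges heA'
      -- extract a shorter ear from the chain c ⇝ z inside R'
      have hR'' : (R'.takeUntil z hzR').IsPath := hR'.takeUntil hzR'
      obtain ⟨w₁, hw₁A, pre₁, hfirst₁, hsub₁, hpath₁, hlen₁⟩ :=
        exists_firsthit (R'.takeUntil z hzR').reverse {u | u ∈ A'.support} hcA'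
      have hpre₁ : pre₁.IsPath := hpath₁ hR''.reverse
      obtain ⟨w₂, hw₂B, pre₂, hfirst₂, hsub₂, hpath₂, hlen₂⟩ :=
        exists_firsthit pre₁.reverse {u | u ∈ B'.support} hzB'
      have hpre₂ : pre₂.IsPath := hpath₂ hpre₁.reverse
      have hsubR : ∀ u ∈ pre₂.support, u ∈ R'.support := by
        intro u hu
        have h1' := hsub₂ u hu
        rw [SimpleGraph.Walk.support_reverse, List.mem_reverse] at h1'
        have h2' := hsub₁ u h1'
        rw [SimpleGraph.Walk.support_reverse, List.mem_reverse] at h2'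
        exact SimpleGraph.Walk.support_takeUntil_subset _ hzR' h2'
      have hint' : ∀ u ∈ pre₂.support, u ≠ w₁ → u ≠ w₂ →
          u ∉ A'.support ∧ u ∉ B'.support := by
        intro u hu hu1 hu2
        constructor
        · intro hA''
          apply hu1
          have h1' := hsub₂ u hu
          rw [SimpleGraph.Walk.support_reverse, List.mem_reverse] at h1'
          exact hfirst₁ u h1' hA''
        · exact fun hB'' => hu2 (hfirst₂ u hu hB'')
      have hterm' : ∀ q' ∈ pre₂.support, q' ∉ Q := by
        intro q' hq'
        exact hterm q' (by
          rw [SimpleGraph.Walk.support_cons]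
          exact List.mem_cons_of_mem _ (hsubR q' hq'))
      have hlen' : pre₂.length ≤ n := by
        have l1 : pre₂.length ≤ pre₁.reverse.length := hlen₂
        rw [SimpleGraph.Walk.length_reverse] at l1
        have l2 : pre₁.length ≤ (R'.takeUntil z hzR').reverse.length := hlen₁
        rw [SimpleGraph.Walk.length_reverse] at l2
        have l3 := SimpleGraph.Walk.length_takeUntil_le R' hzR'
        have l4 : R'.length + 1 ≤ n + 1 := by simpa using hlen
        omega
      exact ih τ x hτQ hx hτx A' B' hA' hB' hdA'B' w₁ w₂ pre₂ hpre₂ hw₁A hw₂B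
        hint' hterm' hlen'

end Main


/-- In a graph that minimally biconnects `Q`, for terminals `x, y`
and any two internally vertex-disjoint `x`-`y` paths `p₁, p₂`, every path joining
a vertex of `p₁` to a vertex of `p₂` off `p₁ ∪ p₂` contains a terminal. -/
theorem stmt_13 (G : SimpleGraph V) (Q : Set V)
    (hmin : MinQR G Q (fun _ => 2))
    (x y : V) (hx : x ∈ Q) (hy : y ∈ Q) (hxy : x ≠ y)
    (p1 p2 : G.Walk x y) (h1 : p1.IsPath) (h2 : p2.IsPath)
    (hd : IntDisjoint p1 p2)
    (a b : V) (R : G.Walk a b) (hR : R.IsPath)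
    (ha : a ∈ p1.support) (hb : b ∈ p2.support)
    (hint : ∀ w ∈ R.support, w ≠ a → w ≠ b → w ∉ p1.support ∧ w ∉ p2.support) :
    ∃ q ∈ R.support, q ∈ Q := by
  by_contra hcon
  push_neg at hcon
  exact main_aux G Q hmin.1 hmin.2.1 R.length x y hx hy hxy p1 p2 h1 h2 hd a b R hR
    ha hb hint hcon (le_refl _)
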